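/- Let d ≥ 2 and n be positive integers with d dividing n, and set r = (d-1)n/d (so r = (d-1)(n-r)). Then for every n-weight function f with f⁺ = r, one has φ(f,d) ≥ C(r,d) + C(r,d-1). -/

import Mathlib

open Finset

private lemma perm_of_card_eq {α : Type*} [Fintype α] [DecidableEq α]
    {S T : Finset α} (h : S.card = T.card) :
    ∃ π : α ≃ α, S.image π = T := by
  classical
  have e1 : {x // x ∈ S} ≃ {x // x ∈ T} := Finset.equivOfCardEq h
  have hc : Fintype.card {x // ¬ x ∈ S} = Fintype.card {x // ¬ x ∈ T} := by
    simp [Fintype.card_subtype_compl, Fintype.card_coe, h]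
  have e2 : {x // ¬ x ∈ S} ≃ {x // ¬ x ∈ T} := Fintype.equivOfCardEq hc
  refine ⟨(Equiv.sumCompl (· ∈ S)).symm.trans ((e1.sumCongr e2).trans (Equiv.sumCompl (· ∈ T))), ?_⟩
  have hsub : S.image ((Equiv.sumCompl (· ∈ S)).symm.trans ((e1.sumCongr e2).trans (Equiv.sumCompl (· ∈ T)))) ⊆ T := by
    intro x hx
    simp only [Finset.mem_image] at hx
    obtain ⟨a, ha, rfl⟩ := hx
    simp [Equiv.sumCompl_symm_apply_of_pos (p := (· ∈ S)) ha]
  refine Finset.eq_of_subset_of_card_le hsub ?_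
  rw [Finset.card_image_of_injective _ (Equiv.injective _), ← h]

private def row {α : Type*} [DecidableEq α] {k m : ℕ} (F : (Fin m × Fin k) ≃ α) (i : Fin m) :
    Finset α :=
  (univ : Finset (Fin k)).image (fun j => F (i, j))

private lemma row_inj {α : Type*} [DecidableEq α] {k m : ℕ} (F : (Fin m × Fin k) ≃ α)
    (i : Fin m) : Function.Injective (fun j : Fin k => F (i, j)) := by
  intro a b hab
  have := F.injective hab
  simpa using this

private lemma row_card {α : Type*} [DecidableEq α] {k m : ℕ} (F : (Fin m × Fin k) ≃ α)
    (i : Fin m) : (row F i).card = k := by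
  rw [row, Finset.card_image_of_injective _ (row_inj F i), card_univ, Fintype.card_fin]

private lemma sum_row {α : Type*} [DecidableEq α] {k m : ℕ} (F : (Fin m × Fin k) ≃ α)
    (i : Fin m) (g : α → ℝ) : ∑ x ∈ row F i, g x = ∑ j : Fin k, g (F (i, j)) := by
  rw [row, Finset.sum_image]
  intro a _ b _ hab
  exact row_inj F i hab

private lemma row_trans {α : Type*} [DecidableEq α] {k m : ℕ} (F : (Fin m × Fin k) ≃ α)
    (π : α ≃ α) (i : Fin m) : row (F.trans π) i = (row F i).image π := by
  rw [row, row, Finset.image_image]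
  rfl

private lemma aFib_const {α : Type*} [Fintype α] [DecidableEq α] {k m : ℕ}
    (i : Fin m) {S T : Finset α} (hST : S.card = T.card) :
    (univ.filter fun F : (Fin m × Fin k) ≃ α => row F i = S).card
      = (univ.filter fun F : (Fin m × Fin k) ≃ α => row F i = T).card := by
  classical
  obtain ⟨π, hπ⟩ := perm_of_card_eq hST
  have hπ' : T.image π.symm = S := by
    rw [← hπ, Finset.image_image]
    simp
  refine Finset.card_bij' (fun F _ => F.trans π) (fun F _ => F.trans π.symm) ?_ ?_ ?_ ?_
  · intro F hF
    simp only [Finset.mem_filter, Finset.mem_univ, true_and] at hF ⊢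
    rw [row_trans, hF, hπ]
  · intro F hF
    simp only [Finset.mem_filter, Finset.mem_univ, true_and] at hF ⊢
    rw [row_trans, hF, hπ']
  · intro F _
    ext x
    simp
  · intro F _
    ext x
    simp

private lemma bFib_const {β : Type*} [Fintype β] [DecidableEq β] {m : ℕ}
    (i : Fin m) (y y' : β) :
    (univ.filter fun G : Fin m ≃ β => G i = y).card
      = (univ.filter fun G : Fin m ≃ β => G i = y').card := by
  refine Finset.card_bij' (fun G _ => G.trans (Equiv.swap y y'))
    (fun G _ => G.trans (Equiv.swap y y')) ?_ ?_ ?_ ?_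
  · intro G hG
    simp only [Finset.mem_filter, Finset.mem_univ, true_and] at hG ⊢
    simp [hG]
  · intro G hG
    simp only [Finset.mem_filter, Finset.mem_univ, true_and] at hG ⊢
    simp [hG]
  · intro G _
    ext x
    simp
  · intro G _
    ext x
    simp

private lemma key {α β : Type*} [Fintype α] [Fintype β] [DecidableEq α] [DecidableEq β]
    (k m : ℕ) (hm : 0 < m)
    (ha : Fintype.card α = k * m) (hb : Fintype.card β = m)
    (g : α → ℝ) (h : β → ℝ)
    (hsum : 0 ≤ (∑ x, g x) + ∑ y, h y) :
    (k * m).choose k ≤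
      (((univ : Finset α).powersetCard k ×ˢ (univ : Finset β)).filter
        (fun p => 0 ≤ (∑ x ∈ p.1, g x) + h p.2)).card := by
  classical
  haveI : Nonempty (Fin m) := ⟨⟨0, hm⟩⟩
  haveI : Nonempty β := Fintype.card_pos_iff.mp (by omega)
  set GP := (((univ : Finset α).powersetCard k ×ˢ (univ : Finset β)).filter
        (fun p => 0 ≤ (∑ x ∈ p.1, g x) + h p.2)) with hGPdef
  -- existence of a good block in every configuration
  have hex : ∀ (F : (Fin m × Fin k) ≃ α) (G : Fin m ≃ β),
      ∃ i, 0 ≤ (∑ x ∈ row F i, g x) + h (G i) := by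
    intro F G
    by_contra hc
    push_neg at hc
    have h1 : ∑ i : Fin m, ((∑ x ∈ row F i, g x) + h (G i)) < ∑ _i : Fin m, (0:ℝ) :=
      Finset.sum_lt_sum_of_nonempty Finset.univ_nonempty (fun i _ => hc i)
    rw [Finset.sum_const_zero] at h1
    have h2 : ∑ i : Fin m, ((∑ x ∈ row F i, g x) + h (G i)) = (∑ x, g x) + ∑ y, h y := by
      rw [Finset.sum_add_distrib]
      congr 1
      · simp_rw [sum_row]
        rw [← F.sum_comp g, Fintype.sum_prod_type]
      · exact G.sum_comp h
    rw [h2] at h1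
    linarith
  -- N₁
  set N₁ := ∑ F : (Fin m × Fin k) ≃ α, ∑ G : Fin m ≃ β,
      (univ.filter fun i : Fin m => 0 ≤ (∑ x ∈ row F i, g x) + h (G i)).card with hN₁def
  have hlow : Fintype.card ((Fin m × Fin k) ≃ α) * Fintype.card (Fin m ≃ β) ≤ N₁ := by
    have : ∀ (F : (Fin m × Fin k) ≃ α) (G : Fin m ≃ β),
        1 ≤ (univ.filter fun i : Fin m => 0 ≤ (∑ x ∈ row F i, g x) + h (G i)).card := by
      intro F G
      refine Finset.card_pos.mpr ?_
      obtain ⟨i, hi⟩ := hex F G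
      exact ⟨i, by simp [hi]⟩
    calc Fintype.card ((Fin m × Fin k) ≃ α) * Fintype.card (Fin m ≃ β)
        = ∑ _F : (Fin m × Fin k) ≃ α, ∑ _G : Fin m ≃ β, 1 := by
          simp [Finset.card_univ, mul_comm]
      _ ≤ N₁ := by
          rw [hN₁def]
          exact Finset.sum_le_sum (fun F _ => Finset.sum_le_sum (fun G _ => this F G))
  -- membership rewrite
  have hmem : ∀ (F : (Fin m × Fin k) ≃ α) (G : Fin m ≃ β) (i : Fin m),
      (0 ≤ (∑ x ∈ row F i, g x) + h (G i)) ↔ (row F i, G i) ∈ GP := by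
    intro F G i
    simp [hGPdef, Finset.mem_filter, Finset.mem_product, mem_powersetCard_univ, row_card]
  -- swap
  have hswap : N₁ = ∑ i : Fin m,
      (((univ ×ˢ univ : Finset ((((Fin m × Fin k) ≃ α)) × (Fin m ≃ β)))).filter
        (fun FG => (row FG.1 i, FG.2 i) ∈ GP)).card := by
    rw [hN₁def]
    simp_rw [Finset.card_filter, hmem, Finset.sum_product]
    calc ∑ F : (Fin m × Fin k) ≃ α, ∑ G : Fin m ≃ β, ∑ i : Fin m,
          (if (row F i, G i) ∈ GP then 1 else 0)
        = ∑ F : (Fin m × Fin k) ≃ α, ∑ i : Fin m, ∑ G : Fin m ≃ β,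
          (if (row F i, G i) ∈ GP then 1 else 0) :=
          Finset.sum_congr rfl (fun F _ => Finset.sum_comm)
      _ = ∑ i : Fin m, ∑ F : (Fin m × Fin k) ≃ α, ∑ G : Fin m ≃ β,
          (if (row F i, G i) ∈ GP then 1 else 0) := Finset.sum_comm
  -- fiber decomposition
  have hfib : ∀ i : Fin m,
      (((univ ×ˢ univ : Finset ((((Fin m × Fin k) ≃ α)) × (Fin m ≃ β)))).filter
        (fun FG => (row FG.1 i, FG.2 i) ∈ GP)).card
      = ∑ p ∈ GP, ((univ.filter fun F : (Fin m × Fin k) ≃ α => row F i = p.1).card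
          * (univ.filter fun G : Fin m ≃ β => G i = p.2).card) := by
    intro i
    rw [Finset.card_eq_sum_card_fiberwise
      (s := ((univ ×ˢ univ : Finset ((((Fin m × Fin k) ≃ α)) × (Fin m ≃ β)))).filter
        (fun FG => (row FG.1 i, FG.2 i) ∈ GP))
      (f := fun FG : (((Fin m × Fin k) ≃ α) × (Fin m ≃ β)) => (row FG.1 i, FG.2 i)) (t := GP)
      (fun FG hFG => (Finset.mem_filter.mp hFG).2)]
    refine Finset.sum_congr rfl (fun p hp => ?_)
    have heq : (((univ ×ˢ univ : Finset ((((Fin m × Fin k) ≃ α)) × (Fin m ≃ β)))).filter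
          (fun FG => (row FG.1 i, FG.2 i) ∈ GP)).filter
        (fun FG => (row FG.1 i, FG.2 i) = p)
        = (univ ×ˢ univ).filter
          (fun FG : (((Fin m × Fin k) ≃ α) × (Fin m ≃ β)) => row FG.1 i = p.1 ∧ FG.2 i = p.2) := by
      ext FG
      simp only [Finset.mem_filter, Finset.mem_product, Finset.mem_univ, true_and,
        Prod.ext_iff]
      constructor
      · rintro ⟨_, h1, h2⟩; exact ⟨h1, h2⟩
      · rintro ⟨h1, h2⟩
        refine ⟨?_, h1, h2⟩
        rw [h1, h2]
        simpa using hp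
    rw [heq, Finset.filter_product (fun F : (Fin m × Fin k) ≃ α => row F i = p.1)
      (fun G : Fin m ≃ β => G i = p.2), Finset.card_product]
  -- pick reference objects
  have hpos : 0 < (k*m).choose k := Nat.choose_pos (Nat.le_mul_of_pos_right k hm)
  have hne : ((univ : Finset α).powersetCard k).Nonempty := by
    rw [← Finset.card_pos, Finset.card_powersetCard, Finset.card_univ, ha]; exact hpos
  obtain ⟨S₀, hS₀⟩ := hne
  have hS₀c : S₀.card = k := mem_powersetCard_univ.mp hS₀
  obtain ⟨y₀⟩ := ‹Nonempty β›
  haveI : Nonempty ((Fin m × Fin k) ≃ α) := ⟨Fintype.equivOfCardEq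
    (by rw [Fintype.card_prod, Fintype.card_fin, Fintype.card_fin, ha, Nat.mul_comm])⟩
  haveI : Nonempty (Fin m ≃ β) := ⟨Fintype.equivOfCardEq (by rw [Fintype.card_fin, hb])⟩
  have hA : ∀ i : Fin m, Fintype.card ((Fin m × Fin k) ≃ α)
      = (k*m).choose k * (univ.filter fun F : (Fin m × Fin k) ≃ α => row F i = S₀).card := by
    intro i
    have h1 : (univ : Finset ((Fin m × Fin k) ≃ α)).card
        = ∑ S ∈ (univ : Finset α).powersetCard k,
          (univ.filter fun F : (Fin m × Fin k) ≃ α => row F i = S).card :=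
      Finset.card_eq_sum_card_fiberwise (fun F _ => mem_powersetCard_univ.mpr (row_card F i))
    rw [Finset.card_univ] at h1
    rw [h1, Finset.sum_congr rfl
      (fun S hS => aFib_const i ((mem_powersetCard_univ.mp hS).trans hS₀c.symm)),
      Finset.sum_const, smul_eq_mul, Finset.card_powersetCard, Finset.card_univ, ha]
  have hB : ∀ i : Fin m, Fintype.card (Fin m ≃ β)
      = m * (univ.filter fun G : Fin m ≃ β => G i = y₀).card := by
    intro i
    have h1 : (univ : Finset (Fin m ≃ β)).card
        = ∑ y ∈ (univ : Finset β), (univ.filter fun G : Fin m ≃ β => G i = y).card :=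
      Finset.card_eq_sum_card_fiberwise (fun G _ => Finset.mem_univ _)
    rw [Finset.card_univ] at h1
    rw [h1, Finset.sum_congr rfl (fun y _ => bFib_const i y y₀), Finset.sum_const,
      smul_eq_mul, Finset.card_univ, hb]
  have hGPsum : ∀ i : Fin m, ∑ p ∈ GP,
      ((univ.filter fun F : (Fin m × Fin k) ≃ α => row F i = p.1).card
        * (univ.filter fun G : Fin m ≃ β => G i = p.2).card)
      = GP.card * ((univ.filter fun F : (Fin m × Fin k) ≃ α => row F i = S₀).card
        * (univ.filter fun G : Fin m ≃ β => G i = y₀).card) := by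
    intro i
    have hcg : ∀ p ∈ GP,
        ((univ.filter fun F : (Fin m × Fin k) ≃ α => row F i = p.1).card
          * (univ.filter fun G : Fin m ≃ β => G i = p.2).card)
        = ((univ.filter fun F : (Fin m × Fin k) ≃ α => row F i = S₀).card
          * (univ.filter fun G : Fin m ≃ β => G i = y₀).card) := by
      intro p hp
      have hp1 : p.1.card = k := by
        have h2 := (Finset.mem_product.mp (Finset.mem_filter.mp hp).1).1
        exact mem_powersetCard_univ.mp h2
      rw [aFib_const i (hp1.trans hS₀c.symm), bFib_const i p.2 y₀]
    rw [Finset.sum_congr rfl hcg, Finset.sum_const, smul_eq_mul]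
  have hN₁ : N₁ = ∑ i : Fin m, GP.card
      * ((univ.filter fun F : (Fin m × Fin k) ≃ α => row F i = S₀).card
        * (univ.filter fun G : Fin m ≃ β => G i = y₀).card) := by
    rw [hswap]
    exact Finset.sum_congr rfl (fun i _ => by rw [hfib i, hGPsum i])
  set A := Fintype.card ((Fin m × Fin k) ≃ α) with hAdef
  set B := Fintype.card (Fin m ≃ β) with hBdef
  have hterm : ∀ i : Fin m, (k*m).choose k * m * (GP.card
      * ((univ.filter fun F : (Fin m × Fin k) ≃ α => row F i = S₀).card
        * (univ.filter fun G : Fin m ≃ β => G i = y₀).card)) = GP.card * (A * B) := by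
    intro i
    rw [hA i, hB i]
    ring
  have hCN : (k*m).choose k * m * N₁ = m * (GP.card * (A * B)) := by
    rw [hN₁, Finset.mul_sum, Finset.sum_congr rfl (fun i _ => hterm i), Finset.sum_const,
      Finset.card_univ, Fintype.card_fin, smul_eq_mul]
  have hABpos : 0 < m * (A * B) := by
    have h1 : 0 < A := Fintype.card_pos
    have h2 : 0 < B := Fintype.card_pos
    positivity
  have hfinal : (k*m).choose k * (m * (A * B)) ≤ GP.card * (m * (A * B)) := by
    calc (k*m).choose k * (m * (A * B)) = (k*m).choose k * m * (A * B) := by ring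
      _ ≤ (k*m).choose k * m * N₁ := Nat.mul_le_mul_left _ hlow
      _ = m * (GP.card * (A * B)) := hCN
      _ = GP.card * (m * (A * B)) := by ring
  exact Nat.le_of_mul_le_mul_right hfinal hABpos

open Finset in
theorem stmt_15 (d n r : ℕ) (hd : 2 ≤ d) (hn : 0 < n) (hdvd : d ∣ n)
    (hr : r = (d - 1) * n / d)
    (f : Fin n → ℝ) (hsum : 0 ≤ ∑ x, f x)
    (hplus : (univ.filter fun x => 0 ≤ f x).card = r) :
    r.choose d + r.choose (d - 1) ≤
      ((univ.powersetCard d).filter fun Y => 0 ≤ ∑ y ∈ Y, f y).card := by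
  classical
  obtain ⟨m, hnm⟩ := hdvd
  set k := d - 1 with hkdef
  have hk1 : k + 1 = d := by omega
  have hm : 0 < m := by
    rcases Nat.eq_zero_or_pos m with h0 | h0
    · subst h0; omega
    · exact h0
  have hrkm : r = k * m := by
    rw [hr, hnm]
    have h2 : (d-1) * (d * m) = (d-1) * m * d := by ring
    rw [h2, Nat.mul_div_cancel _ (by omega : 0 < d)]
  set P := (univ.filter fun x : Fin n => 0 ≤ f x) with hPdef
  set N := (univ.filter fun x : Fin n => ¬ 0 ≤ f x) with hNdef
  have hPN : P.card + N.card = n := by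
    rw [hPdef, hNdef, Finset.card_filter_add_card_filter_not, Finset.card_univ,
      Fintype.card_fin]
  have hrm : r + m = n := by
    rw [hrkm, hnm, ← hk1]; ring
  have hNcard : N.card = m := by omega
  have hPcard_type : Fintype.card {x // x ∈ P} = k * m := by
    rw [Fintype.card_coe, hplus, hrkm]
  have hNcard_type : Fintype.card {x // x ∈ N} = m := by
    rw [Fintype.card_coe, hNcard]
  have hsum' : 0 ≤ (∑ x : {x // x ∈ P}, f x.1) + ∑ y : {x // x ∈ N}, f y.1 := by
    rw [Finset.sum_coe_sort P f, Finset.sum_coe_sort N f, hPdef, hNdef,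
      Finset.sum_filter_add_sum_filter_not]
    exact hsum
  have hkey := key k m hm hPcard_type hNcard_type (fun x => f x.1) (fun y => f y.1) hsum'
  set GP := (((univ : Finset {x // x ∈ P}).powersetCard k ×ˢ (univ : Finset {x // x ∈ N})).filter
      (fun p => 0 ≤ (∑ x ∈ p.1, f x.1) + f p.2.1)) with hGPdef
  set T := ((univ.powersetCard d).filter fun Y : Finset (Fin n) => 0 ≤ ∑ y ∈ Y, f y) with hTdef
  set Tneg := T.filter (fun Y => ∃ y ∈ Y, f y < 0) with hTnegdef
  set Tpos := T.filter (fun Y => ¬ ∃ y ∈ Y, f y < 0) with hTposdef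
  have hsplit : Tneg.card + Tpos.card = T.card :=
    Finset.card_filter_add_card_filter_not _
  -- the purely nonnegative d-sets
  have hTpos : r.choose d ≤ Tpos.card := by
    have hsub : P.powersetCard d ⊆ Tpos := by
      intro Y hY
      rw [Finset.mem_powersetCard] at hY
      obtain ⟨hYP, hYc⟩ := hY
      have hall : ∀ y ∈ Y, 0 ≤ f y := by
        intro y hy
        exact (Finset.mem_filter.mp (hYP hy)).2
      rw [hTposdef, Finset.mem_filter, hTdef, Finset.mem_filter]
      refine ⟨⟨mem_powersetCard_univ.mpr hYc, Finset.sum_nonneg hall⟩, ?_⟩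
      rintro ⟨y, hy, hylt⟩
      exact absurd (hall y hy) (not_le.mpr hylt)
    calc r.choose d = (P.powersetCard d).card := by
          rw [Finset.card_powersetCard, hplus]
      _ ≤ Tpos.card := Finset.card_le_card hsub
  -- the mixed d-sets, via the key lemma
  have hTneg : r.choose k ≤ Tneg.card := by
    have h1 : (k * m).choose k ≤ GP.card := hkey
    rw [← hrkm] at h1
    refine h1.trans ?_
    set emb : {x // x ∈ P} ↪ Fin n := Function.Embedding.subtype _ with hembdef
    have hmemmap : ∀ (S : Finset {x // x ∈ P}) (z : Fin n), z ∈ S.map emb → 0 ≤ f z := by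
      intro S z hz
      rw [Finset.mem_map] at hz
      obtain ⟨x, _, rfl⟩ := hz
      exact (Finset.mem_filter.mp x.2).2
    have hGPelt : ∀ p ∈ GP, f p.2.1 < 0 ∧ p.2.1 ∉ p.1.map emb ∧ (p.1.map emb).card = k ∧
        0 ≤ (∑ x ∈ p.1, f x.1) + f p.2.1 := by
      intro p hp
      rw [hGPdef, Finset.mem_filter] at hp
      obtain ⟨hp1, hp2⟩ := hp
      rw [Finset.mem_product] at hp1
      have hyneg : f p.2.1 < 0 := not_le.mp (Finset.mem_filter.mp p.2.2).2
      refine ⟨hyneg, ?_, ?_, hp2⟩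
      · intro hcon
        exact absurd (hmemmap _ _ hcon) (not_le.mpr hyneg)
      · rw [Finset.card_map]
        exact mem_powersetCard_univ.mp hp1.1
    refine Finset.card_le_card_of_injOn
      (fun p => insert p.2.1 (p.1.map emb)) ?_ ?_
    · intro p hp
      obtain ⟨hyneg, hnm', hcard, hsge⟩ := hGPelt p hp
      rw [Finset.mem_coe, hTnegdef, Finset.mem_filter, hTdef, Finset.mem_filter]
      have hcard2 : (insert p.2.1 (p.1.map emb)).card = d := by
        rw [Finset.card_insert_of_notMem hnm', hcard, hk1]
      have hsumY : 0 ≤ ∑ y ∈ insert p.2.1 (p.1.map emb), f y := by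
        rw [Finset.sum_insert hnm', Finset.sum_map]
        have : ∀ x : {x // x ∈ P}, f (emb x) = f x.1 := fun x => rfl
        simp_rw [this]
        linarith [hsge]
      exact ⟨⟨mem_powersetCard_univ.mpr hcard2, hsumY⟩,
        ⟨p.2.1, Finset.mem_insert_self _ _, hyneg⟩⟩
    · intro p hp q hq heq
      have hp' := hGPelt p (Finset.mem_coe.mp hp)
      have hq' := hGPelt q (Finset.mem_coe.mp hq)
      obtain ⟨hpneg, hpnm, -, -⟩ := hp'
      obtain ⟨hqneg, hqnm, -, -⟩ := hq'
      simp only at heq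
      have hy : p.2.1 = q.2.1 := by
        have h1 : p.2.1 ∈ insert q.2.1 (q.1.map emb) := by
          rw [← heq]; exact Finset.mem_insert_self _ _
        rcases Finset.mem_insert.mp h1 with h | h
        · exact h
        · exact absurd (hmemmap _ _ h) (not_le.mpr hpneg)
      have hfil : ∀ (S : Finset {x // x ∈ P}) (y : Fin n), f y < 0 →
          (insert y (S.map emb)).filter (fun x => 0 ≤ f x) = S.map emb := by
        intro S y hy
        ext z
        simp only [Finset.mem_filter, Finset.mem_insert]
        constructor
        · rintro ⟨rfl | h, hz⟩
          · exact absurd hz (not_le.mpr hy)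
          · exact h
        · intro h
          exact ⟨Or.inr h, hmemmap _ _ h⟩
      have hS : p.1.map emb = q.1.map emb := by
        rw [← hfil p.1 p.2.1 hpneg, ← hfil q.1 q.2.1 hqneg, heq]
      have hS1 : p.1 = q.1 := Finset.map_injective emb hS
      have hy2 : p.2 = q.2 := Subtype.ext hy
      exact Prod.ext hS1 hy2
  calc r.choose d + r.choose (d - 1) = r.choose d + r.choose k := rfl
    _ ≤ Tpos.card + Tneg.card := Nat.add_le_add hTpos hTneg
    _ = T.card := by omega
    _ = _ := by rw [hTdef]
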